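/- Let ν : F × F → ℕ be finitely supported on a finite set F², let w : F × F → ℂ, and let r ≥ 1 be an integer. Then |∑_{u₁,u₂} ν(u₁,u₂)·w(u₁,u₂)| ≤ (∑ ν)^{1−1/r} · (∑ ν²)^{1/(2r)} · (∑ |w|^{2r})^{1/(2r)}. -/

import Mathlib

open Finset

theorem stmt_14 {F : Type*} [Fintype F] (ν : F × F → ℕ) (w : F × F → ℂ)
    (r : ℕ) (hr : 1 ≤ r) :
    ‖∑ u : F × F, (ν u : ℂ) * w u‖
      ≤ (∑ u : F × F, (ν u : ℝ)) ^ (1 - 1 / (r : ℝ)) *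
        (∑ u : F × F, (ν u : ℝ) ^ 2) ^ (1 / (2 * (r : ℝ))) *
        (∑ u : F × F, ‖w u‖ ^ (2 * r)) ^ (1 / (2 * (r : ℝ))) := by
  have hr1 : (1 : ℝ) ≤ (r : ℝ) := by exact_mod_cast hr
  set R : ℝ := (r : ℝ) with hR
  have hR0 : (0 : ℝ) < R := lt_of_lt_of_le one_pos hr1
  set S := ∑ u : F × F, (ν u : ℝ) with hS
  set Q := ∑ u : F × F, (ν u : ℝ) ^ 2 with hQ
  set W := ∑ u : F × F, ‖w u‖ ^ (2 * r) with hW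
  have hS0 : 0 ≤ S := Finset.sum_nonneg fun u _ => Nat.cast_nonneg _
  have hQ0 : 0 ≤ Q := Finset.sum_nonneg fun u _ => sq_nonneg _
  -- Step 0: triangle inequality
  have step0 : ‖∑ u : F × F, (ν u : ℂ) * w u‖
      ≤ ∑ u : F × F, (ν u : ℝ) * ‖w u‖ := by
    refine (norm_sum_le _ _).trans_eq ?_
    refine Finset.sum_congr rfl fun u _ => ?_
    simp [norm_mul]
  -- Hölder with exponents p = 2r/(2r-1), q = 2r
  have h2r1 : (0:ℝ) < 2 * R - 1 := by linarith
  have hpq : Real.HolderConjugate ((2 * R) / (2 * R - 1)) (2 * R) := by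
    rw [Real.holderConjugate_iff]; constructor
    · rw [lt_div_iff₀ h2r1]; linarith
    · field_simp
      ring
  have step1 : ∑ u : F × F, (ν u : ℝ) * ‖w u‖
      ≤ (∑ u : F × F, (ν u : ℝ) ^ ((2 * R) / (2 * R - 1))) ^ ((2 * R - 1) / (2 * R))
        * W ^ (1 / (2 * R)) := by
    have h := Real.inner_le_Lp_mul_Lq_of_nonneg (s := (univ : Finset (F × F))) hpq
      (f := fun u => (ν u : ℝ)) (g := fun u => ‖w u‖)
      (fun u _ => Nat.cast_nonneg _) (fun u _ => norm_nonneg _)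
    have hWeq : (∑ u : F × F, ‖w u‖ ^ (2 * R)) = W := by
      rw [hW]
      refine Finset.sum_congr rfl fun u _ => ?_
      rw [show ((2:ℝ) * R) = ((2 * r : ℕ) : ℝ) by push_cast; ring, Real.rpow_natCast]
    have he : 1 / ((2 * R) / (2 * R - 1)) = (2 * R - 1) / (2 * R) := one_div_div _ _
    calc ∑ u : F × F, (ν u : ℝ) * ‖w u‖
        ≤ (∑ u : F × F, (ν u : ℝ) ^ ((2*R)/(2*R-1))) ^ (1/((2*R)/(2*R-1))) *
          (∑ u : F × F, ‖w u‖ ^ (2*R)) ^ (1/(2*R)) := h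
      _ = _ := by rw [he, hWeq]
  -- Second step: bound ∑ ν^{2r/(2r-1)} by S^{(2r-2)/(2r-1)} Q^{1/(2r-1)}
  have step2 : (∑ u : F × F, (ν u : ℝ) ^ ((2 * R) / (2 * R - 1)))
      ≤ S ^ ((2 * R - 2) / (2 * R - 1)) * Q ^ (1 / (2 * R - 1)) := by
    rcases eq_or_lt_of_le hr1 with h1 | h1
    · -- r = 1
      have : (2 * R) / (2 * R - 1) = 2 := by rw [← h1]; norm_num
      rw [this]
      have e1 : (2 * R - 2) / (2 * R - 1) = 0 := by rw [← h1]; norm_num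
      have e2 : 1 / (2 * R - 1) = 1 := by rw [← h1]; norm_num
      rw [e1, e2, Real.rpow_zero, Real.rpow_one, one_mul, hQ]
      refine le_of_eq (Finset.sum_congr rfl fun u _ => ?_)
      rw [show (2:ℝ) = ((2:ℕ):ℝ) by norm_num, Real.rpow_natCast]
    · have h22 : (0:ℝ) < 2 * R - 2 := by linarith
      have hab : Real.HolderConjugate ((2 * R - 1) / (2 * R - 2)) (2 * R - 1) := by
        rw [Real.holderConjugate_iff]; constructor
        · rw [lt_div_iff₀ h22]; linarith
        · field_simp
          ring
      have := Real.inner_le_Lp_mul_Lq_of_nonneg (univ : Finset (F × F)) hab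
        (f := fun u => (ν u : ℝ) ^ ((2 * R - 2) / (2 * R - 1)))
        (g := fun u => (ν u : ℝ) ^ (2 / (2 * R - 1)))
        (fun u _ => Real.rpow_nonneg (Nat.cast_nonneg _) _)
        (fun u _ => Real.rpow_nonneg (Nat.cast_nonneg _) _)
      calc (∑ u : F × F, (ν u : ℝ) ^ ((2 * R) / (2 * R - 1)))
          = ∑ u : F × F, (ν u : ℝ) ^ ((2 * R - 2) / (2 * R - 1)) * (ν u : ℝ) ^ (2 / (2 * R - 1)) := by
            refine Finset.sum_congr rfl fun u _ => ?_
            have hexp : (2 * R - 2) / (2 * R - 1) + 2 / (2 * R - 1) = (2 * R) / (2 * R - 1) := by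
              field_simp
              ring
            rw [← Real.rpow_add' (Nat.cast_nonneg _) (by rw [hexp]; positivity), hexp]
        _ ≤ (∑ u : F × F, ((ν u : ℝ) ^ ((2 * R - 2) / (2 * R - 1))) ^ ((2 * R - 1) / (2 * R - 2))) ^ (1 / ((2 * R - 1) / (2 * R - 2)))
            * (∑ u : F × F, ((ν u : ℝ) ^ (2 / (2 * R - 1))) ^ (2 * R - 1)) ^ (1 / (2 * R - 1)) := this
        _ = S ^ ((2 * R - 2) / (2 * R - 1)) * Q ^ (1 / (2 * R - 1)) := by
            rw [one_div_div]
            congr 1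
            · congr 1
              refine Finset.sum_congr rfl fun u _ => ?_
              rw [← Real.rpow_mul (Nat.cast_nonneg _),
                show (2*R-2)/(2*R-1) * ((2*R-1)/(2*R-2)) = 1 by field_simp,
                Real.rpow_one]
            · congr 1
              refine Finset.sum_congr rfl fun u _ => ?_
              rw [← Real.rpow_mul (Nat.cast_nonneg _),
                show 2/(2*R-1) * (2*R-1) = 2 by field_simp,
                show (2:ℝ) = ((2:ℕ):ℝ) by norm_num, Real.rpow_natCast]
  -- combine
  have hWsum0 : 0 ≤ ∑ u : F × F, (ν u : ℝ) ^ ((2 * R) / (2 * R - 1)) :=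
    Finset.sum_nonneg fun u _ => Real.rpow_nonneg (Nat.cast_nonneg _) _
  have step3 : (∑ u : F × F, (ν u : ℝ) ^ ((2 * R) / (2 * R - 1))) ^ ((2 * R - 1) / (2 * R))
      ≤ S ^ (1 - 1 / R) * Q ^ (1 / (2 * R)) := by
    have hmono := Real.rpow_le_rpow hWsum0 step2 (by positivity : (0:ℝ) ≤ (2 * R - 1) / (2 * R))
    refine hmono.trans_eq ?_
    rw [Real.mul_rpow (Real.rpow_nonneg hS0 _) (Real.rpow_nonneg hQ0 _),
      ← Real.rpow_mul hS0, ← Real.rpow_mul hQ0]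
    congr 2
    · field_simp
    · field_simp
  have hW0 : 0 ≤ W ^ (1 / (2 * R)) := Real.rpow_nonneg
    (Finset.sum_nonneg fun u _ => pow_nonneg (norm_nonneg _) _) _
  calc ‖∑ u : F × F, (ν u : ℂ) * w u‖
      ≤ ∑ u : F × F, (ν u : ℝ) * ‖w u‖ := step0
    _ ≤ (∑ u : F × F, (ν u : ℝ) ^ ((2 * R) / (2 * R - 1))) ^ ((2 * R - 1) / (2 * R)) * W ^ (1 / (2 * R)) := step1
    _ ≤ (S ^ (1 - 1 / R) * Q ^ (1 / (2 * R))) * W ^ (1 / (2 * R)) := by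
        exact mul_le_mul_of_nonneg_right step3 hW0
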